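/- Let H = (f, φ; g, ψ) with entries in L²(𝕋) and suppose R_H is bounded on L²(𝕋). Then R_H = 0 if and only if f = 0, ψ = 0, and both g and φ̄ belong to H². -/

import Mathlib

open MeasureTheory AddCircle Filter Topology
open scoped ENNReal

noncomputable section

namespace GSIO

instance : Fact (0 < 2 * Real.pi) := ⟨by positivity⟩

/-- The unit circle, realized as `ℝ / 2πℤ`. -/
abbrev 𝕋 : Type := AddCircle (2 * Real.pi)

/-- Normalized Lebesgue (Haar) measure on the circle. -/
abbrev μ : Measure 𝕋 := @haarAddCircle (2 * Real.pi) _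

/-- `L²(𝕋)`. -/
abbrev L2 : Type := Lp ℂ 2 μ

/-- The embedding `𝕋 ⊆ ℂ`, `t ↦ e^{it}`. -/
def e : C(𝕋, ℂ) := ⟨fun t => (toCircle t : ℂ), continuous_induced_dom.comp continuous_toCircle⟩

/-- The Hardy space `H²`: the closed linear span of `{zⁿ : n ≥ 0}` in `L²`. -/
def H2 : Submodule ℂ L2 :=
  (Submodule.span ℂ (Set.range fun n : ℕ => (fourierLp 2 (n : ℤ) : L2))).topologicalClosure

instance : CompleteSpace H2 :=
  IsClosed.completeSpace_coe (hs := Submodule.isClosed_topologicalClosure _)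

/-- The Riesz projection `P₊ : L² → H² ⊆ L²`. -/
def Pplus : L2 →L[ℂ] L2 := (H2.subtypeL).comp (H2.orthogonalProjectionOnto)

/-- `P₋ = I - P₊`. -/
def Pminus : L2 →L[ℂ] L2 := ContinuousLinearMap.id ℂ L2 - Pplus

/-- The GSIO defining relation `R x = P₊(f·P₊x) + P₋(g·P₊x) + P₊(φ·P₋x) + P₋(ψ·P₋x)`
at a point `x ∈ L²` (including the requirement that the four products lie in `L²`). -/
def gsioEq (R : L2 → L2) (f g φ ψ : 𝕋 → ℂ) (x : L2) : Prop :=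
  ∃ (h₁ : MemLp (f * ⇑(Pplus x)) 2 μ) (h₂ : MemLp (g * ⇑(Pplus x)) 2 μ)
    (h₃ : MemLp (φ * ⇑(Pminus x)) 2 μ) (h₄ : MemLp (ψ * ⇑(Pminus x)) 2 μ),
    R x = Pplus (h₁.toLp _) + Pminus (h₂.toLp _) + Pplus (h₃.toLp _) + Pminus (h₄.toLp _)

/-- `R` is the (bounded) generalized singular integral operator with
symbol matrix `(f, φ; g, ψ)`. -/
def IsGSIO (R : L2 →L[ℂ] L2) (f g φ ψ : 𝕋 → ℂ) : Prop := ∀ x : L2, gsioEq (⇑R) f g φ ψ x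

/-- Normalized reproducing kernel `k_z` of `H²`, as an element of `L²`. -/
def kern (z : ℂ) : L2 :=
  (Real.sqrt (1 - ‖z‖ ^ 2) : ℂ) • ∑' n : ℕ, (starRingEnd ℂ z) ^ n • (fourierLp 2 (n : ℤ) : L2)

/-- The unit vector `z̄k̄_z : w ↦ w̄ ⬝ conj (k_z w)` of `(H²)^⊥`, as an element of `L²`. -/
def kbar (z : ℂ) : L2 :=
  (Real.sqrt (1 - ‖z‖ ^ 2) : ℂ) • ∑' n : ℕ, z ^ n • (fourierLp 2 (-(n + 1) : ℤ) : L2)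

/-- `L∞(𝕋)`: essentially bounded (a.e. strongly measurable) functions. -/
def Linf : Set (𝕋 → ℂ) := {h | MemLp h ∞ μ}

/-- `C(𝕋)`: functions (a.e. equal to) continuous functions. -/
def CT : Set (𝕋 → ℂ) := {h | ∃ c : 𝕋 → ℂ, Continuous c ∧ h =ᵐ[μ] c}

/-- `H∞ = H² ∩ L∞`. -/
def Hinf : Set (𝕋 → ℂ) := {h | ∃ h2 : MemLp h 2 μ, h2.toLp h ∈ H2 ∧ MemLp h ∞ μ}

/-- `H∞ + C(𝕋)`. -/
def HinfC : Set (𝕋 → ℂ) := {h | ∃ a ∈ Hinf, ∃ c ∈ CT, h =ᵐ[μ] a + c}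

/-- The quasicontinuous functions `QC = (H∞ + C) ∩ conj (H∞ + C)`. -/
def QC : Set (𝕋 → ℂ) := {h | h ∈ HinfC ∧ star h ∈ HinfC}

/-- The set of GSIOs with all four symbols in `S`. -/
def gsioSet (S : Set (𝕋 → ℂ)) : Set (L2 →L[ℂ] L2) :=
  {R | ∃ f g φ ψ : 𝕋 → ℂ, f ∈ S ∧ g ∈ S ∧ φ ∈ S ∧ ψ ∈ S ∧ IsGSIO R f g φ ψ}

/-- The C*-algebra `𝔑_S` generated by the GSIOs with symbols in `S`. -/
def NAlg (S : Set (𝕋 → ℂ)) : StarSubalgebra ℂ (L2 →L[ℂ] L2) :=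
  (StarAlgebra.adjoin ℂ (gsioSet S)).topologicalClosure

/-- Generators `R_{H₁} R_{H₂} - R_K` of the semicommutator ideal. -/
def semiGen (S : Set (𝕋 → ℂ)) : Set (L2 →L[ℂ] L2) :=
  {T | ∃ f₁ g₁ φ₁ ψ₁ f₂ g₂ φ₂ ψ₂ g φ : 𝕋 → ℂ,
      f₁ ∈ S ∧ g₁ ∈ S ∧ φ₁ ∈ S ∧ ψ₁ ∈ S ∧ f₂ ∈ S ∧ g₂ ∈ S ∧ φ₂ ∈ S ∧ ψ₂ ∈ S ∧
      g ∈ S ∧ φ ∈ S ∧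
      ∃ R₁ R₂ RK : L2 →L[ℂ] L2, IsGSIO R₁ f₁ g₁ φ₁ ψ₁ ∧ IsGSIO R₂ f₂ g₂ φ₂ ψ₂ ∧
        IsGSIO RK (f₁ * f₂) g φ (ψ₁ * ψ₂) ∧ T = R₁ * R₂ - RK}

/-- The closed two-sided ideal `𝔖𝔑_S` of `𝔑_S` generated by the semicommutators. -/
def SemiIdeal (S : Set (𝕋 → ℂ)) : Set (L2 →L[ℂ] L2) :=
  closure (AddSubgroup.closure
    {T | ∃ a b t : L2 →L[ℂ] L2, a ∈ NAlg S ∧ b ∈ NAlg S ∧ t ∈ semiGen S ∧ T = a * t * b} :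
      Set (L2 →L[ℂ] L2))

/-- Fredholm: closed range and finite-dimensional kernel and cokernel. -/
def IsFredholm (T : L2 →L[ℂ] L2) : Prop :=
  FiniteDimensional ℂ (LinearMap.ker (T : L2 →ₗ[ℂ] L2)) ∧
  FiniteDimensional ℂ (L2 ⧸ LinearMap.range (T : L2 →ₗ[ℂ] L2)) ∧
  IsClosed (LinearMap.range (T : L2 →ₗ[ℂ] L2) : Set L2)

/-- Fredholm index `ind T = dim ker T - dim ker T*`. -/
def ind (T : L2 →L[ℂ] L2) : ℤ :=
  (Module.finrank ℂ (LinearMap.ker (T : L2 →ₗ[ℂ] L2)) : ℤ) -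
    (Module.finrank ℂ (LinearMap.ker (ContinuousLinearMap.adjoint T : L2 →ₗ[ℂ] L2)) : ℤ)

/-- Essential spectrum (spectrum in the Calkin algebra, via Atkinson's theorem). -/
def essSpectrum (T : L2 →L[ℂ] L2) : Set ℂ := {z | ¬ IsFredholm (T - z • 1)}

/-- Essential norm: distance to the compact operators. -/
def essNorm (T : L2 →L[ℂ] L2) : ℝ :=
  sInf ((fun K => ‖T + K‖) '' {K : L2 →L[ℂ] L2 | IsCompactOperator K})

/-- Essential range of a measurable function. -/
def essRange (f : 𝕋 → ℂ) : Set ℂ := {c | ∀ ε > 0, μ {t | dist (f t) c < ε} ≠ 0}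

/-- `a` has winding number `w` about the origin, via a continuous argument lift. -/
def HasWindingNumber (a : C(𝕋, ℂ)) (w : ℤ) : Prop :=
  ∃ θ : ℝ → ℝ, ContinuousOn θ (Set.Icc 0 (2 * Real.pi)) ∧
    (∀ t ∈ Set.Icc 0 (2 * Real.pi),
      a (t : 𝕋) = (‖a (t : 𝕋)‖ : ℂ) * Complex.exp (θ t * Complex.I)) ∧
    θ (2 * Real.pi) - θ 0 = 2 * Real.pi * w

/-- The constant function `1` in `L²`. -/
def one2 : L2 := MemLp.toLp (fun _ => (1 : ℂ)) (memLp_const 1)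

/-- The rank-one operator `1 ⊗ 1 : x ↦ ⟨x,1⟩·1`. -/
def oneProj : L2 →L[ℂ] L2 := (innerSL ℂ one2).smulRight one2

/-- The Hilbert transform `ℍ = P₊ - P₋ - 1⊗1`. -/
def hilbertT : L2 →L[ℂ] L2 := Pplus - Pminus - oneProj

/-- `BMO(𝕋) = L∞ + ℍ L∞`, as a subset of `L²`. -/
def BMO2 : Set L2 := {x | ∃ a b : L2, ⇑a ∈ Linf ∧ ⇑b ∈ Linf ∧ x = a + hilbertT b}

/-- `⋂_{p ≥ 1} L^p(𝕋)`. -/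
def Lfin : Set (𝕋 → ℂ) := {h | ∀ p : ℝ, 1 ≤ p → MemLp h (ENNReal.ofReal p) μ}

/-- The GSIO relation for a map defined on functions (rather than on `L²`). -/
def gsioEqF (R : (𝕋 → ℂ) → (𝕋 → ℂ)) (f g φ ψ : 𝕋 → ℂ) (x : 𝕋 → ℂ) : Prop :=
  ∃ (hx : MemLp x 2 μ)
    (h₁ : MemLp (f * ⇑(Pplus (hx.toLp x))) 2 μ) (h₂ : MemLp (g * ⇑(Pplus (hx.toLp x))) 2 μ)
    (h₃ : MemLp (φ * ⇑(Pminus (hx.toLp x))) 2 μ) (h₄ : MemLp (ψ * ⇑(Pminus (hx.toLp x))) 2 μ),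
    R x =ᵐ[μ] ⇑(Pplus (h₁.toLp _) + Pminus (h₂.toLp _) + Pplus (h₃.toLp _) + Pminus (h₄.toLp _))

/-- Distance in `L∞` from a function to `H∞`. -/
def distHinfF (a : 𝕋 → ℂ) : ℝ :=
  sInf {r : ℝ | ∃ h ∈ Hinf, r = (eLpNorm (a - h) ∞ μ).toReal}

end GSIO

namespace GSIO

/-- The radial-limit function of `T` along the reproducing kernels `k_{rξ}` is `f`:
`lim_{r→1⁻} ⟨T k_{rξ}, k_{rξ}⟩ = f ξ` for a.e. `ξ` (inner products in the Mathlib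
convention, conjugate-linear in the first variable). -/
def symbPlus (T : L2 → L2) (f : 𝕋 → ℂ) : Prop :=
  ∀ᵐ ξ ∂μ, Tendsto
    (fun r : ℝ => (inner ℂ (kern ((r : ℂ) * e ξ)) (T (kern ((r : ℂ) * e ξ))) : ℂ))
    (𝓝[<] (1 : ℝ)) (𝓝 (f ξ))

/-- The radial-limit function of `T` along the vectors `z̄k̄_{rξ}` is `ψ`:
`lim_{r→1⁻} ⟨T z̄k̄_{rξ}, z̄k̄_{rξ}⟩ = ψ ξ` for a.e. `ξ`. -/
def symbMinus (T : L2 → L2) (ψ : 𝕋 → ℂ) : Prop :=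
  ∀ᵐ ξ ∂μ, Tendsto
    (fun r : ℝ => (inner ℂ (kbar ((r : ℂ) * e ξ)) (T (kbar ((r : ℂ) * e ξ))) : ℂ))
    (𝓝[<] (1 : ℝ)) (𝓝 (ψ ξ))

/-- `ρ(T) = (f, ψ)`: the pair of radial-limit symbol functions of `T`, in `L∞ ⊕ L∞`. -/
def HasSymbol (T : L2 →L[ℂ] L2) (f ψ : 𝕋 → ℂ) : Prop :=
  f ∈ Linf ∧ ψ ∈ Linf ∧ symbPlus (⇑T) f ∧ symbMinus (⇑T) ψ

end GSIO


open scoped InnerProductSpace ComplexConjugate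

namespace GSIO

/-! ### Auxiliary lemmas for `gsio_eq_zero_iff` -/

abbrev FB : HilbertBasis ℤ ℂ L2 := @fourierBasis (2 * Real.pi) _

lemma fb_eq (n : ℤ) : (⇑FB : ℤ → L2) n = (fourierLp 2 n : L2) := by
  rw [coe_fourierBasis]

lemma rep_eq_inner (x : L2) (n : ℤ) :
    FB.repr x n = ⟪(fourierLp 2 n : L2), x⟫_ℂ := by
  rw [FB.repr_apply_apply, fb_eq]

lemma fourierLp_mem_H2 (n : ℕ) : (fourierLp 2 (n : ℤ) : L2) ∈ H2 :=
  Submodule.le_topologicalClosure _ (Submodule.subset_span ⟨n, rfl⟩)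

lemma inner_eq_zero_on_H2 {w : L2}
    (hw : ∀ n : ℕ, ⟪w, (fourierLp 2 (n : ℤ) : L2)⟫_ℂ = 0)
    {v : L2} (hv : v ∈ H2) : ⟪w, v⟫_ℂ = 0 := by
  have hle : H2 ≤ LinearMap.ker (innerSL ℂ w : L2 →ₗ[ℂ] ℂ) := by
    apply Submodule.topologicalClosure_minimal
    · rw [Submodule.span_le]
      rintro _ ⟨n, rfl⟩
      simpa [LinearMap.mem_ker] using hw n
    · exact ContinuousLinearMap.isClosed_ker _
  simpa using hle hv

lemma coeff_H2 {x : L2} (hx : x ∈ H2) {n : ℤ} (hn : n < 0) : FB.repr x n = 0 := by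
  rw [rep_eq_inner]
  apply inner_eq_zero_on_H2 (fun m : ℕ => ?_) hx
  exact orthonormal_fourier.2 (by exact_mod_cast hn.trans_le (Int.ofNat_nonneg m) |>.ne)

lemma eq_zero_of_repr {x : L2} (h : ∀ n : ℤ, FB.repr x n = 0) : x = 0 := by
  have hs := FB.hasSum_repr x
  simp only [h, zero_smul] at hs
  exact hs.unique hasSum_zero

lemma mem_H2_of_coeff {x : L2} (h : ∀ n : ℤ, n < 0 → FB.repr x n = 0) : x ∈ H2 := by
  have hs := FB.hasSum_repr x
  have hcl : IsClosed (H2 : Set L2) := Submodule.isClosed_topologicalClosure _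
  refine hcl.mem_of_tendsto hs (Filter.Eventually.of_forall fun s => ?_)
  refine Submodule.sum_mem _ fun i _ => ?_
  rcases lt_or_ge i 0 with hi | hi
  · rw [h i hi, zero_smul]; exact Submodule.zero_mem _
  · refine Submodule.smul_mem _ _ ?_
    have : i = ((i.toNat : ℕ) : ℤ) := (Int.toNat_of_nonneg hi).symm
    rw [fb_eq, this]
    exact fourierLp_mem_H2 i.toNat

lemma pplus_mem (x : L2) : Pplus x ∈ H2 := (H2.orthogonalProjectionOnto x).2

lemma pminus_eq (x : L2) : Pminus x = x - Pplus x := rfl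

lemma pminus_mem (x : L2) : Pminus x ∈ H2ᗮ := by
  rw [pminus_eq]
  exact Submodule.sub_starProjection_mem_orthogonal (K := H2) x

lemma inner_pminus {u : L2} (hu : u ∈ H2) (x : L2) : ⟪u, Pminus x⟫_ℂ = 0 :=
  (Submodule.mem_orthogonal _ _).1 (pminus_mem x) u hu

lemma rep_pplus (x : L2) {n : ℤ} (hn : 0 ≤ n) : FB.repr (Pplus x) n = FB.repr x n := by
  have hmem : (fourierLp 2 n : L2) ∈ H2 := by
    have : n = ((n.toNat : ℕ) : ℤ) := (Int.toNat_of_nonneg hn).symm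
    rw [this]; exact fourierLp_mem_H2 n.toNat
  have h0 := inner_pminus hmem x
  rw [pminus_eq, inner_sub_right, sub_eq_zero] at h0
  rw [rep_eq_inner, rep_eq_inner, h0]

lemma pplus_eq_self {x : L2} (hx : x ∈ H2) : Pplus x = x := by
  show H2.subtypeL (H2.orthogonalProjectionOnto x) = x
  have : H2.orthogonalProjectionOnto x = ⟨x, hx⟩ :=
    Submodule.orthogonalProjectionOnto_mem_subspace_eq_self (⟨x, hx⟩ : H2)
  rw [this]; rfl

lemma pplus_eq_zero {x : L2} (h : ∀ n : ℤ, 0 ≤ n → FB.repr x n = 0) : Pplus x = 0 := by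
  apply eq_zero_of_repr
  intro n
  rcases lt_or_ge n 0 with hn | hn
  · exact coeff_H2 (pplus_mem x) hn
  · rw [rep_pplus x hn]; exact h n hn

lemma pminus_eq_zero {x : L2} (h : ∀ n : ℤ, n < 0 → FB.repr x n = 0) : Pminus x = 0 := by
  rw [pminus_eq, pplus_eq_self (mem_H2_of_coeff h), sub_self]

lemma rep_zero_of_pplus {x : L2} (h : Pplus x = 0) {n : ℤ} (hn : 0 ≤ n) :
    FB.repr x n = 0 := by
  rw [← rep_pplus x hn, h]
  simp

lemma rep_zero_of_pminus {x : L2} (h : Pminus x = 0) {n : ℤ} (hn : n < 0) :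
    FB.repr x n = 0 := by
  have hx : x ∈ H2 := by
    have h' : x - Pplus x = 0 := by rw [← pminus_eq]; exact h
    have : x = Pplus x := by rwa [sub_eq_zero] at h'
    rw [this]; exact pplus_mem x
  exact coeff_H2 hx hn

lemma split_zero {a b : L2} (ha : a ∈ H2) (hb : b ∈ H2ᗮ) (hab : a + b = 0) :
    a = 0 ∧ b = 0 := by
  have hba : b = -a := eq_neg_of_add_eq_zero_right hab
  have hbH : b ∈ H2 := hba ▸ Submodule.neg_mem _ ha
  have hb0 : b = 0 := by
    have := (Submodule.mem_orthogonal _ _).1 hb b hbH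
    exact inner_self_eq_zero.1 this
  have ha0 : a = 0 := by rwa [hb0, add_zero] at hab
  exact ⟨ha0, hb0⟩

lemma fc_congr {a b : 𝕋 → ℂ} (h : a =ᵐ[μ] b) (n : ℤ) :
    fourierCoeff a n = fourierCoeff b n := by
  unfold fourierCoeff
  exact integral_congr_ae (h.mono fun t ht => by simp only [ht])

lemma rep_toLp {a : 𝕋 → ℂ} (ha : MemLp a 2 μ) (n : ℤ) :
    FB.repr (ha.toLp a) n = fourierCoeff a n := by
  rw [fourierBasis_repr]
  exact fc_congr (MemLp.coeFn_toLp ha) n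

lemma fc_mul_fourier (a : 𝕋 → ℂ) (m n : ℤ) :
    fourierCoeff (fun t => fourier m t * a t) n = fourierCoeff a (n - m) := by
  unfold fourierCoeff
  refine integral_congr_ae (Filter.Eventually.of_forall fun t => ?_)
  have h : @fourier (2 * Real.pi) (-n) t * fourier m t = fourier (-(n - m)) t := by
    rw [← fourier_add]; congr 1; ring
  simp only [smul_eq_mul]
  rw [← mul_assoc, h]

lemma fc_conj (a : 𝕋 → ℂ) (n : ℤ) :
    fourierCoeff (star a) n = conj (fourierCoeff a (-n)) := by
  unfold fourierCoeff
  rw [← integral_conj]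
  refine integral_congr_ae (Filter.Eventually.of_forall fun t => ?_)
  simp only [smul_eq_mul, Pi.star_apply, map_mul, neg_neg]
  rw [← fourier_neg]
  rfl

lemma memLp_star {a : 𝕋 → ℂ} (ha : MemLp a 2 μ) : MemLp (star a) 2 μ := by
  refine ⟨Complex.continuous_conj.comp_aestronglyMeasurable ha.1, ?_⟩
  have hsa : star a = fun t => star (a t) := rfl
  rw [hsa, eLpNorm_congr_norm_ae (Filter.Eventually.of_forall fun t => norm_star (a t))]
  exact ha.2

lemma memLp_fourier_mul (k : ℤ) {a : 𝕋 → ℂ} (ha : MemLp a 2 μ) :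
    MemLp (fun t => fourier k t * a t) 2 μ := by
  have hk : MemLp (⇑(@fourier (2 * Real.pi) k)) ⊤ μ :=
    memLp_top_of_bound (fourier k).continuous.aestronglyMeasurable 1
      (Filter.Eventually.of_forall fun t => by
        simp [Circle.norm_coe])
  exact MemLp.mul' (p := ⊤) ha hk

lemma inner_toLp_left {w : 𝕋 → ℂ} (hw : MemLp w 2 μ) (v : L2) :
    ⟪(hw.toLp w : L2), v⟫_ℂ = ∫ t, conj (w t) * v t ∂μ := by
  rw [MeasureTheory.L2.inner_def]
  refine integral_congr_ae ?_
  filter_upwards [MemLp.coeFn_toLp hw] with t ht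
  rw [RCLike.inner_apply, ht, mul_comm]

lemma fc_eq_inner {w a : 𝕋 → ℂ} (hw : MemLp w 2 μ) (v : L2) (k : ℤ)
    (hwa : ∀ t, conj (w t) = fourier (-k) t * a t) :
    fourierCoeff (a * ⇑v) k = ⟪(hw.toLp w : L2), v⟫_ℂ := by
  rw [inner_toLp_left]
  unfold fourierCoeff
  refine integral_congr_ae (Filter.Eventually.of_forall fun t => ?_)
  simp only [smul_eq_mul, Pi.mul_apply, hwa t]
  ring

lemma conj_fourier_star (c : 𝕋 → ℂ) (k : ℤ) (t : 𝕋) :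
    conj (fourier k t * star c t) = fourier (-k) t * c t := by
  rw [map_mul, ← fourier_neg, Pi.star_apply]
  simp

lemma fc_gterm {g : 𝕋 → ℂ} (hg : MemLp g 2 μ) (hgH : hg.toLp g ∈ H2) (x : L2)
    {k : ℤ} (hk : k < 0) : fourierCoeff (g * ⇑(Pplus x)) k = 0 := by
  have hwm : MemLp (fun t => fourier k t * star g t) 2 μ :=
    memLp_fourier_mul k (memLp_star hg)
  rw [fc_eq_inner hwm (Pplus x) k (conj_fourier_star g k)]
  apply inner_eq_zero_on_H2 (fun n => ?_) (pplus_mem x)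
  rw [← inner_conj_symm, ← rep_eq_inner, rep_toLp hwm,
    fc_mul_fourier (star g) k ((n : ℤ)), fc_conj]
  have h0 : fourierCoeff g (-((n : ℤ) - k)) = 0 := by
    rw [← rep_toLp hg]
    exact coeff_H2 hgH (by omega)
  rw [h0]
  simp

lemma fc_phiterm {φ : 𝕋 → ℂ} (hc : MemLp (star φ) 2 μ)
    (hcH : hc.toLp (star φ) ∈ H2) (x : L2) {k : ℤ} (hk : 0 ≤ k) :
    fourierCoeff (φ * ⇑(Pminus x)) k = 0 := by
  have hwm : MemLp (fun t => fourier k t * star φ t) 2 μ := memLp_fourier_mul k hc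
  rw [fc_eq_inner hwm (Pminus x) k (conj_fourier_star φ k)]
  refine inner_pminus ?_ x
  apply mem_H2_of_coeff
  intro m hm
  rw [rep_toLp hwm, fc_mul_fourier (star φ) k m, ← rep_toLp hc]
  exact coeff_H2 hcH (by omega)

lemma toLp_eq_zero' {a : 𝕋 → ℂ} (ha : MemLp a 2 μ) (h : a =ᵐ[μ] 0) :
    ha.toLp a = 0 := by
  rw [(MemLp.toLp_eq_toLp_iff ha MemLp.zero).2 h, MemLp.toLp_zero]

lemma ae_zero_of_toLp {a : 𝕋 → ℂ} (ha : MemLp a 2 μ) (h : ha.toLp a = 0) :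
    a =ᵐ[μ] 0 := by
  rw [← MemLp.toLp_zero (MemLp.zero (p := 2) (μ := μ) (ε := ℂ))] at h
  exact (MemLp.toLp_eq_toLp_iff ha MemLp.zero).1 h

lemma mul_ae_zero {a : 𝕋 → ℂ} (h : a =ᵐ[μ] 0) (u : 𝕋 → ℂ) : a * u =ᵐ[μ] 0 := by
  filter_upwards [h] with t ht
  simp [Pi.mul_apply, ht]

lemma mul_ae_zero' (a : 𝕋 → ℂ) {u : 𝕋 → ℂ} (h : u =ᵐ[μ] 0) : a * u =ᵐ[μ] 0 := by
  filter_upwards [h] with t ht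
  simp [Pi.mul_apply, ht]

lemma pplus_fourier {j : ℕ} : Pplus (fourierLp 2 (j : ℤ) : L2) = fourierLp 2 (j : ℤ) :=
  pplus_eq_self (fourierLp_mem_H2 j)

lemma pminus_fourier {j : ℕ} : Pminus (fourierLp 2 (j : ℤ) : L2) = 0 := by
  rw [pminus_eq, pplus_fourier, sub_self]

lemma fourier_neg_mem_orth {m : ℤ} (hm : m < 0) :
    (fourierLp 2 m : L2) ∈ H2ᗮ := by
  rw [Submodule.mem_orthogonal]
  intro u hu
  rw [← inner_conj_symm]
  rw [inner_eq_zero_on_H2 (fun n : ℕ => ?_) hu]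
  · simp
  · exact orthonormal_fourier.2 (by exact_mod_cast hm.trans_le (Int.ofNat_nonneg n) |>.ne)

lemma pplus_fourier_neg {m : ℤ} (hm : m < 0) : Pplus (fourierLp 2 m : L2) = 0 := by
  show H2.subtypeL (H2.orthogonalProjectionOnto _) = 0
  rw [Submodule.orthogonalProjectionOnto_apply_of_mem_orthogonal
    (fourier_neg_mem_orth hm)]
  rfl

lemma pminus_fourier_neg {m : ℤ} (hm : m < 0) :
    Pminus (fourierLp 2 m : L2) = fourierLp 2 m := by
  rw [pminus_eq, pplus_fourier_neg hm, sub_zero]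

/-- Coefficient extraction at a test vector `fourierLp 2 m`. -/
lemma fc_term {c : 𝕋 → ℂ} {u : L2} {m : ℤ} (hu : ⇑u =ᵐ[μ] fourier m)
    (hcm : MemLp (c * ⇑u) 2 μ) (n : ℤ) :
    FB.repr (hcm.toLp (c * ⇑u)) n = fourierCoeff c (n - m) := by
  rw [rep_toLp hcm, ← fc_mul_fourier c m n]
  apply fc_congr
  filter_upwards [hu] with t ht
  simp only [Pi.mul_apply, ht]
  ring

end GSIO

namespace GSIO

/-- If `R_H` is bounded with symbols in `L²(𝕋)`, then `R_H = 0` iff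
`f = 0`, `ψ = 0`, and both `g` and `φ̄` belong to `H²`. -/
theorem gsio_eq_zero_iff (f g φ ψ : 𝕋 → ℂ)
    (hf : MemLp f 2 μ) (hg : MemLp g 2 μ) (hφ : MemLp φ 2 μ) (hψ : MemLp ψ 2 μ)
    (R : L2 →L[ℂ] L2) (hR : IsGSIO R f g φ ψ) :
    R = 0 ↔ (f =ᵐ[μ] 0 ∧ ψ =ᵐ[μ] 0 ∧ hg.toLp g ∈ H2 ∧
      ∃ hc : MemLp (star φ) 2 μ, hc.toLp (star φ) ∈ H2) := by
  constructor
  · intro hR0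
    have key1 : ∀ j : ℕ, (∀ n : ℤ, 0 ≤ n → fourierCoeff f (n - (j : ℤ)) = 0) ∧
        (∀ n : ℤ, n < 0 → fourierCoeff g (n - (j : ℤ)) = 0) := by
      intro j
      obtain ⟨h₁, h₂, h₃, h₄, heq⟩ := hR (fourierLp 2 (j : ℤ))
      rw [hR0] at heq
      simp only [ContinuousLinearMap.zero_apply] at heq
      have hu : ⇑(Pplus (fourierLp 2 (j : ℤ) : L2)) =ᵐ[μ] fourier (j : ℤ) := by
        rw [pplus_fourier]; exact coeFn_fourierLp 2 (j : ℤ)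
      have hv0 : ⇑(Pminus (fourierLp 2 (j : ℤ) : L2)) =ᵐ[μ] 0 := by
        rw [pminus_fourier]; exact Lp.coeFn_zero ℂ 2 μ
      have h3z : h₃.toLp _ = 0 := toLp_eq_zero' h₃ (mul_ae_zero' φ hv0)
      have h4z : h₄.toLp _ = 0 := toLp_eq_zero' h₄ (mul_ae_zero' ψ hv0)
      rw [h3z, h4z, map_zero, map_zero, add_zero, add_zero] at heq
      obtain ⟨hA, hB⟩ := split_zero (pplus_mem _) (pminus_mem _) heq.symm
      constructor
      · intro n hn
        rw [← fc_term hu h₁ n]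
        exact rep_zero_of_pplus hA hn
      · intro n hn
        rw [← fc_term hu h₂ n]
        exact rep_zero_of_pminus hB hn
    have key2 : ∀ j : ℕ,
        (∀ n : ℤ, 0 ≤ n → fourierCoeff φ (n - (-(j : ℤ) - 1)) = 0) ∧
        (∀ n : ℤ, n < 0 → fourierCoeff ψ (n - (-(j : ℤ) - 1)) = 0) := by
      intro j
      have hmneg : (-(j : ℤ) - 1) < 0 := by omega
      obtain ⟨h₁, h₂, h₃, h₄, heq⟩ := hR (fourierLp 2 (-(j : ℤ) - 1))
      rw [hR0] at heq
      simp only [ContinuousLinearMap.zero_apply] at heq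
      have hu : ⇑(Pminus (fourierLp 2 (-(j : ℤ) - 1) : L2)) =ᵐ[μ]
          fourier (-(j : ℤ) - 1) := by
        rw [pminus_fourier_neg hmneg]; exact coeFn_fourierLp 2 _
      have hv0 : ⇑(Pplus (fourierLp 2 (-(j : ℤ) - 1) : L2)) =ᵐ[μ] 0 := by
        rw [pplus_fourier_neg hmneg]; exact Lp.coeFn_zero ℂ 2 μ
      have h1z : h₁.toLp _ = 0 := toLp_eq_zero' h₁ (mul_ae_zero' f hv0)
      have h2z : h₂.toLp _ = 0 := toLp_eq_zero' h₂ (mul_ae_zero' g hv0)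
      rw [h1z, h2z, map_zero, map_zero, zero_add, zero_add] at heq
      obtain ⟨hA, hB⟩ := split_zero (pplus_mem _) (pminus_mem _) heq.symm
      constructor
      · intro n hn
        rw [← fc_term hu h₃ n]
        exact rep_zero_of_pplus hA hn
      · intro n hn
        rw [← fc_term hu h₄ n]
        exact rep_zero_of_pminus hB hn
    have hf0 : f =ᵐ[μ] 0 := by
      apply ae_zero_of_toLp hf
      apply eq_zero_of_repr
      intro k
      rw [rep_toLp hf]
      rcases le_or_gt 0 k with hk | hk
      · have := (key1 0).1 k hk
        rwa [show k - ((0 : ℕ) : ℤ) = k by omega] at this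
      · have := (key1 (-k).toNat).1 0 le_rfl
        rwa [show (0 : ℤ) - (((-k).toNat : ℕ) : ℤ) = k by omega] at this
    have hgH : hg.toLp g ∈ H2 := by
      apply mem_H2_of_coeff
      intro n hn
      rw [rep_toLp hg]
      have := (key1 0).2 n hn
      rwa [show n - ((0 : ℕ) : ℤ) = n by omega] at this
    have hψ0 : ψ =ᵐ[μ] 0 := by
      apply ae_zero_of_toLp hψ
      apply eq_zero_of_repr
      intro k
      rw [rep_toLp hψ]
      have := (key2 k.toNat).2 (k - (k.toNat : ℤ) - 1) (by omega)
      rwa [show k - (k.toNat : ℤ) - 1 - (-((k.toNat : ℕ) : ℤ) - 1) = k by omega] at this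
    have hφc : ∀ k : ℤ, 1 ≤ k → fourierCoeff φ k = 0 := by
      intro k hk
      have := (key2 (k - 1).toNat).1 0 le_rfl
      rwa [show (0 : ℤ) - (-(((k - 1).toNat : ℕ) : ℤ) - 1) = k by omega] at this
    refine ⟨hf0, hψ0, hgH, memLp_star hφ, ?_⟩
    apply mem_H2_of_coeff
    intro n hn
    rw [rep_toLp (memLp_star hφ), fc_conj, hφc (-n) (by omega)]
    simp
  · rintro ⟨hf0, hψ0, hgH, hc, hcH⟩
    ext x
    obtain ⟨h₁, h₂, h₃, h₄, heq⟩ := hR x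
    rw [ContinuousLinearMap.zero_apply, heq]
    have t1 : h₁.toLp _ = 0 := toLp_eq_zero' h₁ (mul_ae_zero hf0 _)
    have t4 : h₄.toLp _ = 0 := toLp_eq_zero' h₄ (mul_ae_zero hψ0 _)
    have t2 : Pminus (h₂.toLp _) = 0 := by
      apply pminus_eq_zero
      intro n hn
      rw [rep_toLp h₂]
      exact fc_gterm hg hgH x hn
    have t3 : Pplus (h₃.toLp _) = 0 := by
      apply pplus_eq_zero
      intro n hn
      rw [rep_toLp h₃]
      exact fc_phiterm hc hcH x hn
    rw [t1, t4, map_zero, map_zero, t2, t3]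
    simp

end GSIO
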